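/- arXiv:2206.09374 — 2 statements merged into one kernel-verified Lean document; each statement's English description precedes it below -/
import Mathlib

section
/- Assume in addition that V_1^n = Ṽ_1^{n+1} = 1/‖ 1 ‖ (the normalized constant function on ℝ^d). Define ρ^{n+1} = ‖ 1 ‖ · Σ_k X̃_k^{n+1} S̃^{n+1}_{k1}. Then the discrete mass continuity equation (ρ^{n+1} − ρ^n)/τ + ∇_x · j^n = 0 holds pointwise on Ω_x; in particular ∫_{Ω_x} ρ^{n+1} dx = ∫_{Ω_x} ρ^n dx, i.e. total mass is preserved by one step of the scheme. -/
open MeasureTheory Real Set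

noncomputable section

/-- Partial derivative of `u` in the `i`-th coordinate direction. -/
def pd {d : ℕ} (i : Fin d) (u : (Fin d → ℝ) → ℝ) (x : Fin d → ℝ) : ℝ :=
  fderiv ℝ u x (Pi.single i 1)

/-- Gaussian weight `f_{0v}(v) = exp(-|v|²/2)`. -/
def f0v {d : ℕ} (v : Fin d → ℝ) : ℝ := Real.exp (-(∑ i, v i ^ 2) / 2)

/-- Fundamental domain of the `d`-dimensional torus `Ω_x`. -/
def cube (d : ℕ) : Set (Fin d → ℝ) := Set.univ.pi fun _ => Set.Ioc (0 : ℝ) 1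

/-- `L²(Ω_x)` inner product. -/
def ipx {d : ℕ} (u w : (Fin d → ℝ) → ℝ) : ℝ := ∫ x in cube d, u x * w x

/-- Weighted inner product `⟨u,w⟩_v = ∫ f_{0v} u w dv`. -/
def ipv {d : ℕ} (u w : (Fin d → ℝ) → ℝ) : ℝ := ∫ v, f0v v * u v * w v

/-- Weighted norm `‖w‖ = ⟨w,w⟩_v^{1/2}`. -/
def nv {d : ℕ} (w : (Fin d → ℝ) → ℝ) : ℝ := Real.sqrt (ipv w w)

/-- Periodicity with period 1 in each coordinate (functions on the torus). -/
def Per {d : ℕ} (u : (Fin d → ℝ) → ℝ) : Prop := ∀ x i, u (x + Pi.single i 1) = u x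

/-- All (iterated) derivatives have at most polynomial growth. -/
def PolyAll {d : ℕ} (g : (Fin d → ℝ) → ℝ) : Prop :=
  ∀ n : ℕ, ∃ (C : ℝ) (p : ℕ), ∀ v, ‖iteratedFDeriv ℝ n g v‖ ≤ C * (1 + ‖v‖) ^ p

section Calc
variable {d : ℕ}

lemma pd_congr {u w : (Fin d → ℝ) → ℝ} (h : u = w) (s : Fin d) : pd s u = pd s w := by rw [h]

lemma pd_const_mul {u : (Fin d → ℝ) → ℝ} {x : Fin d → ℝ} (hu : DifferentiableAt ℝ u x)
    (c : ℝ) (s : Fin d) : pd s (fun y => c * u y) x = c * pd s u x := by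
  simp [pd, fderiv_const_mul hu c]

lemma pd_mul_const {u : (Fin d → ℝ) → ℝ} {x : Fin d → ℝ} (hu : DifferentiableAt ℝ u x)
    (c : ℝ) (s : Fin d) : pd s (fun y => u y * c) x = pd s u x * c := by
  simp only [mul_comm _ c]
  exact pd_const_mul hu c s

lemma pd_sum {m : ℕ} {u : Fin m → (Fin d → ℝ) → ℝ} {x : Fin d → ℝ}
    (hu : ∀ i, DifferentiableAt ℝ (u i) x) (s : Fin d) :
    pd s (fun y => ∑ i, u i y) x = ∑ i, pd s (u i) x := by
  simp [pd, fderiv_fun_sum (fun i _ => hu i)]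

lemma pd_mul {u w : (Fin d → ℝ) → ℝ} {x : Fin d → ℝ} (hu : DifferentiableAt ℝ u x)
    (hw : DifferentiableAt ℝ w x) (s : Fin d) :
    pd s (fun y => u y * w y) x = pd s u x * w x + u x * pd s w x := by
  simp [pd, fderiv_fun_mul hu hw, mul_comm]
  ring

lemma contDiff_f0v : ContDiff ℝ (⊤ : ℕ∞) (f0v (d := d)) := by
  unfold f0v
  exact Real.contDiff_exp.comp
    (((ContDiff.sum fun i _ => (contDiff_apply ℝ ℝ i).pow 2).neg).div_const 2)

lemma hasFDerivAt_f0v (v : Fin d → ℝ) :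
    HasFDerivAt f0v
      (f0v v • (((-(∑ i, (v i) • (ContinuousLinearMap.proj i
        : (Fin d → ℝ) →L[ℝ] ℝ)) : (Fin d → ℝ) →L[ℝ] ℝ)))) v := by
  have h1 : HasFDerivAt (fun w : Fin d → ℝ => -(∑ i, w i ^ 2) / 2)
      ((-(∑ i, (v i) • (ContinuousLinearMap.proj i : (Fin d → ℝ) →L[ℝ] ℝ)))) v := by
    have h0 : HasFDerivAt (fun w : Fin d → ℝ => ∑ i, w i ^ 2)
        (∑ i, (2 * v i) • (ContinuousLinearMap.proj i : (Fin d → ℝ) →L[ℝ] ℝ)) v := by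
      apply HasFDerivAt.fun_sum
      intro i _
      have hp : HasFDerivAt (fun w : Fin d → ℝ => w i)
          (ContinuousLinearMap.proj i : (Fin d → ℝ) →L[ℝ] ℝ) v :=
        (ContinuousLinearMap.proj i : (Fin d → ℝ) →L[ℝ] ℝ).hasFDerivAt
      have hfun : (fun w : Fin d → ℝ => w i ^ 2) = fun w => w i * w i := by
        funext w; ring
      have hder : ((2 * v i) • (ContinuousLinearMap.proj i : (Fin d → ℝ) →L[ℝ] ℝ))
          = v i • (ContinuousLinearMap.proj i : (Fin d → ℝ) →L[ℝ] ℝ)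
            + v i • (ContinuousLinearMap.proj i : (Fin d → ℝ) →L[ℝ] ℝ) := by
        rw [two_mul, add_smul]
      rw [hfun, hder]
      exact hp.mul hp
    have h2 := (h0.neg).const_smul ((2 : ℝ)⁻¹)
    have hf2 : (fun w : Fin d → ℝ => -(∑ i, w i ^ 2) / 2)
        = fun w : Fin d → ℝ => (2:ℝ)⁻¹ • (-(∑ i, w i ^ 2)) := by
      funext w; simp; ring
    have hd2 : ((-(∑ i, (v i) • (ContinuousLinearMap.proj i : (Fin d → ℝ) →L[ℝ] ℝ)))
          : (Fin d → ℝ) →L[ℝ] ℝ)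
        = (2:ℝ)⁻¹ • (-(∑ i, (2 * v i) • (ContinuousLinearMap.proj i
          : (Fin d → ℝ) →L[ℝ] ℝ))) := by
      ext w
      simp only [ContinuousLinearMap.neg_apply, ContinuousLinearMap.smul_apply,
        ContinuousLinearMap.coe_sum', Finset.sum_apply, ContinuousLinearMap.proj_apply,
        smul_eq_mul]
      rw [mul_neg, Finset.mul_sum]
      congr 1
      apply Finset.sum_congr rfl
      intros; ring
    rw [hf2, hd2]
    exact h2
  have := h1.exp
  rw [show (f0v (d := d)) = fun v => Real.exp (-(∑ i, v i ^ 2) / 2) from rfl]; simpa using this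

lemma pd_f0v (v : Fin d → ℝ) (s : Fin d) : pd s f0v v = -(v s) * f0v v := by
  rw [pd, (hasFDerivAt_f0v v).fderiv]
  simp [ContinuousLinearMap.sum_apply, Pi.single_apply, Finset.sum_ite_eq']
  ring

lemma differentiable_f0v : Differentiable ℝ (f0v (d := d)) :=
  fun v => (hasFDerivAt_f0v v).differentiableAt

end Calc

section Integr
variable {d : ℕ}

lemma oneD_integrable (p : ℕ) :
    Integrable (fun t : ℝ => (1 + |t|) ^ p * (Real.exp |t| * Real.exp (-(t ^ 2) / 2))) := by
  have hcont : Continuous fun t : ℝ => (1 + |t|) ^ p * (Real.exp |t| * Real.exp (-(t ^ 2) / 2)) := by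
    continuity
  apply Integrable.mono' (g := fun t : ℝ => Real.exp (((p : ℝ) + 1) ^ 2) * Real.exp (-(4⁻¹) * t ^ 2))
  · exact (integrable_exp_neg_mul_sq (by norm_num)).const_mul _
  · exact hcont.aestronglyMeasurable
  · refine ae_of_all _ fun t => ?_
    have h1 : (0:ℝ) ≤ 1 + |t| := by positivity
    rw [Real.norm_eq_abs, abs_of_nonneg (by positivity)]
    have h2 : (1 + |t|) ^ p ≤ Real.exp ((p : ℝ) * |t|) := by
      calc (1 + |t|) ^ p ≤ (Real.exp |t|) ^ p := by
            apply pow_le_pow_left₀ h1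
            linarith [Real.add_one_le_exp |t|]
        _ = Real.exp ((p : ℝ) * |t|) := by rw [← Real.exp_nat_mul]
    calc (1 + |t|) ^ p * (Real.exp |t| * Real.exp (-(t ^ 2) / 2))
        ≤ Real.exp ((p : ℝ) * |t|) * (Real.exp |t| * Real.exp (-(t ^ 2) / 2)) := by
          apply mul_le_mul_of_nonneg_right h2 (by positivity)
      _ = Real.exp (((p : ℝ) + 1) * |t| + (-(t ^ 2) / 2)) := by
          rw [← Real.exp_add, ← Real.exp_add]; ring_nf
      _ ≤ Real.exp (((p : ℝ) + 1) ^ 2 + (-(4⁻¹) * t ^ 2)) := by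
          apply Real.exp_le_exp.2
          nlinarith [abs_nonneg t, sq_abs t, sq_nonneg (|t| / 2 - ((p:ℝ) + 1)),
            Nat.cast_nonneg (α := ℝ) p]
      _ = Real.exp (((p : ℝ) + 1) ^ 2) * Real.exp (-(4⁻¹) * t ^ 2) := Real.exp_add _ _

lemma one_add_sum_le_prod {α : Type*} (t : Finset α) (a : α → ℝ) (ha : ∀ i, 0 ≤ a i) :
    1 + ∑ i ∈ t, a i ≤ ∏ i ∈ t, (1 + a i) := by
  classical
  induction t using Finset.induction with
  | empty => simp
  | insert _ _ hnot ih =>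
    rename_i j t'
    rw [Finset.sum_insert hnot, Finset.prod_insert hnot]
    have h1 : 0 ≤ ∑ i ∈ t', a i := Finset.sum_nonneg fun i _ => ha i
    nlinarith [ha j]

lemma norm_le_sum_abs (v : Fin d → ℝ) : ‖v‖ ≤ ∑ i, |v i| := by
  rcases eq_or_ne d 0 with hd | hd
  · subst hd; simp [Subsingleton.elim v 0]
  · apply pi_norm_le_iff_of_nonneg (Finset.sum_nonneg fun i _ => abs_nonneg _) |>.2
    intro i
    rw [Real.norm_eq_abs]
    exact Finset.single_le_sum (fun j _ => abs_nonneg (v j)) (Finset.mem_univ i)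

lemma f0v_eq_prod (v : Fin d → ℝ) : f0v v = ∏ i, Real.exp (-((v i) ^ 2) / 2) := by
  rw [f0v, ← Real.exp_sum]
  congr 1
  rw [← Finset.sum_div, ← Finset.sum_neg_distrib]

lemma f0v_pos (v : Fin d → ℝ) : 0 < f0v v := Real.exp_pos _

lemma dom_integrable (p : ℕ) :
    Integrable (fun v : Fin d → ℝ => (1 + ‖v‖) ^ p * (Real.exp ‖v‖ * f0v v)) := by
  have hcont : Continuous fun v : Fin d → ℝ => (1 + ‖v‖) ^ p * (Real.exp ‖v‖ * f0v v) := by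
    have : Continuous (f0v (d := d)) := contDiff_f0v.continuous
    continuity
  apply Integrable.mono'
    (g := fun v : Fin d → ℝ =>
      ∏ i, ((1 + |v i|) ^ p * (Real.exp |v i| * Real.exp (-((v i) ^ 2) / 2))))
  · exact Integrable.fintype_prod fun _ => oneD_integrable p
  · exact hcont.aestronglyMeasurable
  · refine ae_of_all _ fun v => ?_
    have hf0 : (0:ℝ) ≤ Real.exp ‖v‖ * f0v v := mul_nonneg (Real.exp_nonneg _) (f0v_pos v).le
    rw [Real.norm_eq_abs, abs_of_nonneg (mul_nonneg (by positivity) hf0)]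
    have h1 : (1 + ‖v‖) ^ p ≤ ∏ i, (1 + |v i|) ^ p := by
      rw [Finset.prod_pow]
      apply pow_le_pow_left₀ (by positivity)
      calc 1 + ‖v‖ ≤ 1 + ∑ i, |v i| := by linarith [norm_le_sum_abs v]
        _ ≤ ∏ i, (1 + |v i|) := one_add_sum_le_prod _ _ fun i => abs_nonneg _
    have h2 : Real.exp ‖v‖ ≤ ∏ i, Real.exp |v i| := by
      rw [← Real.exp_sum]
      exact Real.exp_le_exp.2 (norm_le_sum_abs v)
    calc (1 + ‖v‖) ^ p * (Real.exp ‖v‖ * f0v v)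
        ≤ (∏ i, (1 + |v i|) ^ p) * ((∏ i, Real.exp |v i|) * f0v v) := by
          apply mul_le_mul h1 _ hf0 (Finset.prod_nonneg fun i _ => by positivity)
          exact mul_le_mul_of_nonneg_right h2 (f0v_pos v).le
      _ = ∏ i, ((1 + |v i|) ^ p * (Real.exp |v i| * Real.exp (-((v i) ^ 2) / 2))) := by
          rw [f0v_eq_prod, ← Finset.prod_mul_distrib, ← Finset.prod_mul_distrib]

lemma integrable_dom_bound {g : (Fin d → ℝ) → ℝ} (hc : Continuous g) (C : ℝ) (p : ℕ)
    (h : ∀ v, |g v| ≤ C * ((1 + ‖v‖) ^ p * (Real.exp ‖v‖ * f0v v))) : Integrable g := by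
  apply Integrable.mono' (g := fun v => C * ((1 + ‖v‖) ^ p * (Real.exp ‖v‖ * f0v v)))
    ((dom_integrable p).const_mul C) hc.aestronglyMeasurable
  exact ae_of_all _ fun v => by rw [Real.norm_eq_abs]; exact h v

lemma integrable_f0v_mul {g : (Fin d → ℝ) → ℝ} (hc : Continuous g) (C : ℝ) (p : ℕ)
    (h : ∀ v, |g v| ≤ C * (1 + ‖v‖) ^ p) :
    Integrable (fun v => f0v v * g v) := by
  apply integrable_dom_bound (by exact (contDiff_f0v.continuous).mul hc) C p
  intro v
  have h1 : |f0v v * g v| = f0v v * |g v| := by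
    rw [abs_mul, abs_of_pos (f0v_pos v)]
  have h2 : (0:ℝ) ≤ C * (1 + ‖v‖) ^ p := le_trans (abs_nonneg _) (h v)
  have h3 : (1:ℝ) ≤ Real.exp ‖v‖ := Real.one_le_exp (norm_nonneg v)
  calc |f0v v * g v| = f0v v * |g v| := h1
    _ ≤ f0v v * (C * (1 + ‖v‖) ^ p) := by
        exact mul_le_mul_of_nonneg_left (h v) (f0v_pos v).le
    _ ≤ C * ((1 + ‖v‖) ^ p * (Real.exp ‖v‖ * f0v v)) := by
        have h4 := mul_nonneg (mul_nonneg h2 (f0v_pos v).le) (sub_nonneg.2 h3)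
        nlinarith [h4]

lemma integrable_f0v : Integrable (f0v (d := d)) := by
  have := integrable_f0v_mul (g := fun _ : Fin d → ℝ => (1:ℝ)) continuous_const 1 0 (by simp)
  simpa using this

end Integr

section Poly
variable {d : ℕ}

lemma pd_continuous {u : (Fin d → ℝ) → ℝ} (hu : ContDiff ℝ (⊤ : ℕ∞) u) (s : Fin d) :
    Continuous (pd s u) := by
  have hfd : Continuous (fderiv ℝ u) := hu.continuous_fderiv (by simp)
  exact (ContinuousLinearMap.apply ℝ ℝ (Pi.single s 1)).continuous.comp hfd

lemma polyBound0 {g : (Fin d → ℝ) → ℝ} (h : PolyAll g) :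
    ∃ C p, ∀ v, |g v| ≤ C * (1 + ‖v‖) ^ p := by
  obtain ⟨C, p, hC⟩ := h 0
  exact ⟨C, p, fun v => by simpa [norm_iteratedFDeriv_zero, Real.norm_eq_abs] using hC v⟩

lemma polyBound1 {g : (Fin d → ℝ) → ℝ} (h : PolyAll g) :
    ∃ C p, ∀ v (s : Fin d), |pd s g v| ≤ C * (1 + ‖v‖) ^ p := by
  obtain ⟨C, p, hC⟩ := h 1
  refine ⟨C, p, fun v s => ?_⟩
  have h1 : pd s g v = iteratedFDeriv ℝ 1 g v (fun _ => Pi.single s 1) := by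
    rw [iteratedFDeriv_one_apply]; rfl
  rw [h1]
  have h2 := (iteratedFDeriv ℝ 1 g v).le_opNorm (fun _ => Pi.single s (1:ℝ))
  have h3 : ∏ _i : Fin 1, ‖(Pi.single s (1:ℝ) : Fin d → ℝ)‖ = 1 := by
    simp [Pi.norm_single]
  rw [h3, mul_one] at h2
  exact le_trans (by simpa [Real.norm_eq_abs] using h2) (hC v)

/-- Bounds and smoothness for a linear combination `v ↦ ∑ j, a j * V j v`. -/
lemma comb_smooth {r : ℕ} (V : Fin r → (Fin d → ℝ) → ℝ)
    (hVsm : ∀ j, ContDiff ℝ (⊤ : ℕ∞) (V j)) (a : Fin r → ℝ) :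
    ContDiff ℝ (⊤ : ℕ∞) (fun v => ∑ j, a j * V j v) :=
  ContDiff.sum fun j _ => contDiff_const.mul (hVsm j)

lemma comb_pd {r : ℕ} (V : Fin r → (Fin d → ℝ) → ℝ)
    (hVsm : ∀ j, ContDiff ℝ (⊤ : ℕ∞) (V j)) (a : Fin r → ℝ) (s : Fin d) (v : Fin d → ℝ) :
    pd s (fun w => ∑ j, a j * V j w) v = ∑ j, a j * pd s (V j) v := by
  rw [pd_sum (fun j => ((hVsm j).differentiable (by simp) v).const_mul (a j)) s]
  exact Finset.sum_congr rfl fun j _ =>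
    pd_const_mul ((hVsm j).differentiable (by simp) v) (a j) s

lemma comb_bound {r : ℕ} (V : Fin r → (Fin d → ℝ) → ℝ)
    (hVsm : ∀ j, ContDiff ℝ (⊤ : ℕ∞) (V j)) (hVpoly : ∀ j, PolyAll (V j))
    (a : Fin r → ℝ) :
    ∃ C p, 0 ≤ C ∧ (∀ v, |∑ j, a j * V j v| ≤ C * (1 + ‖v‖) ^ p) ∧
      (∀ v (s : Fin d), |pd s (fun w => ∑ j, a j * V j w) v| ≤ C * (1 + ‖v‖) ^ p) := by
  choose C0 p0 h0 using fun j => polyBound0 (hVpoly j)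
  choose C1 p1 h1 using fun j => polyBound1 (hVpoly j)
  set B : Fin r → ℝ := fun j => max (max (C0 j) (C1 j)) 0 with hB
  set P : ℕ := Finset.univ.sup fun j => max (p0 j) (p1 j) with hP
  refine ⟨∑ j, |a j| * B j, P, Finset.sum_nonneg fun j _ =>
    mul_nonneg (abs_nonneg _) (le_max_right _ _), ?_, ?_⟩
  · intro v
    have hv1 : (1:ℝ) ≤ 1 + ‖v‖ := by linarith [norm_nonneg v]
    calc |∑ j, a j * V j v| ≤ ∑ j, |a j * V j v| := Finset.abs_sum_le_sum_abs _ _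
      _ ≤ ∑ j, |a j| * (B j * (1 + ‖v‖) ^ P) := by
          apply Finset.sum_le_sum
          intro j _
          rw [abs_mul]
          apply mul_le_mul_of_nonneg_left _ (abs_nonneg _)
          calc |V j v| ≤ C0 j * (1 + ‖v‖) ^ p0 j := h0 j v
            _ ≤ B j * (1 + ‖v‖) ^ P := by
                have hBj : C0 j ≤ B j := (le_max_left _ _).trans (le_max_left _ _)
                have hB0 : (0:ℝ) ≤ B j := le_max_right _ _
                have hPj : (1 + ‖v‖) ^ p0 j ≤ (1 + ‖v‖) ^ P :=
                  pow_le_pow_right₀ hv1 ((le_max_left (p0 j) (p1 j)).trans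
                    (Finset.le_sup (f := fun j => max (p0 j) (p1 j)) (Finset.mem_univ j)))
                exact mul_le_mul hBj hPj (by positivity) hB0
      _ = (∑ j, |a j| * B j) * (1 + ‖v‖) ^ P := by rw [Finset.sum_mul]; ring_nf
  · intro v s
    have hv1 : (1:ℝ) ≤ 1 + ‖v‖ := by linarith [norm_nonneg v]
    rw [comb_pd V hVsm a s v]
    calc |∑ j, a j * pd s (V j) v| ≤ ∑ j, |a j * pd s (V j) v| :=
        Finset.abs_sum_le_sum_abs _ _
      _ ≤ ∑ j, |a j| * (B j * (1 + ‖v‖) ^ P) := by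
          apply Finset.sum_le_sum
          intro j _
          rw [abs_mul]
          apply mul_le_mul_of_nonneg_left _ (abs_nonneg _)
          calc |pd s (V j) v| ≤ C1 j * (1 + ‖v‖) ^ p1 j := h1 j v s
            _ ≤ B j * (1 + ‖v‖) ^ P := by
                have hBj : C1 j ≤ B j := (le_max_right _ _).trans (le_max_left _ _)
                have hB0 : (0:ℝ) ≤ B j := le_max_right _ _
                have hPj : (1 + ‖v‖) ^ p1 j ≤ (1 + ‖v‖) ^ P :=
                  pow_le_pow_right₀ hv1 ((le_max_right (p0 j) (p1 j)).trans
                    (Finset.le_sup (f := fun j => max (p0 j) (p1 j)) (Finset.mem_univ j)))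
                exact mul_le_mul hBj hPj (by positivity) hB0
      _ = (∑ j, |a j| * B j) * (1 + ‖v‖) ^ P := by rw [Finset.sum_mul]; ring_nf

end Poly

section Step3
variable {d : ℕ}

lemma integral_pd_f0v_mul {g : (Fin d → ℝ) → ℝ} (hg : ContDiff ℝ (⊤ : ℕ∞) g)
    {C : ℝ} {p : ℕ} (h0 : ∀ v, |g v| ≤ C * (1 + ‖v‖) ^ p)
    (h1 : ∀ v (s' : Fin d), |pd s' g v| ≤ C * (1 + ‖v‖) ^ p) (s : Fin d) :
    ∫ v, pd s (fun w => f0v w * g w) v = 0 := by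
  have hC : 0 ≤ C := le_trans (abs_nonneg (g 0)) (by simpa using h0 0)
  set h : (Fin d → ℝ) → ℝ := fun w => f0v w * g w with hh
  have hsm : ContDiff ℝ (⊤ : ℕ∞) h := contDiff_f0v.mul hg
  have hgd : Differentiable ℝ g := hg.differentiable (by simp)
  have hdiff : Differentiable ℝ h := fun w => (differentiable_f0v w).mul (hgd w)
  have hder : ∀ w, pd s h w = f0v w * (-(w s) * g w + pd s g w) := by
    intro w
    rw [hh, pd_mul (differentiable_f0v w) (hgd w), pd_f0v]
    ring
  set es : Fin d → ℝ := Pi.single s (1:ℝ) with hes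
  have hnes : ‖es‖ = 1 := by rw [hes, Pi.norm_single]; exact norm_one
  set bound : (Fin d → ℝ) → ℝ :=
    fun v => (2 * C * 2 ^ (p+1)) * ((1 + ‖v‖) ^ (p+1) * (Real.exp ‖v‖ * f0v v)) with hbound
  have hbd : ∀ (v : Fin d → ℝ) (t : ℝ), |t| ≤ 1 → |pd s h (v + t • es)| ≤ bound v := by
    intro v t ht
    set w : Fin d → ℝ := v + t • es with hw
    have hv1 : (1:ℝ) ≤ 1 + ‖v‖ := by linarith [norm_nonneg v]
    have hw1 : (1:ℝ) ≤ 1 + ‖w‖ := by linarith [norm_nonneg w]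
    have hnw : ‖w‖ ≤ ‖v‖ + 1 := by
      calc ‖w‖ ≤ ‖v‖ + ‖t • es‖ := norm_add_le _ _
        _ = ‖v‖ + |t| * 1 := by rw [norm_smul, hnes, Real.norm_eq_abs]
        _ ≤ ‖v‖ + 1 := by linarith
    -- pointwise estimate on the bracket
    have hbr : |(-(w s) * g w + pd s g w)| ≤ 2 * C * (1 + ‖w‖) ^ (p+1) := by
      have hws : |w s| ≤ 1 + ‖w‖ := by
        have := norm_le_pi_norm w s
        rw [Real.norm_eq_abs] at this
        linarith
      have e1 : |(-(w s)) * g w| ≤ (1 + ‖w‖) * (C * (1 + ‖w‖) ^ p) := by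
        rw [abs_mul, abs_neg]
        exact mul_le_mul hws (h0 w) (abs_nonneg _) (by linarith)
      have e2 : |pd s g w| ≤ C * (1 + ‖w‖) ^ p := h1 w s
      have e3 : (1 + ‖w‖) * (C * (1 + ‖w‖) ^ p) = C * (1 + ‖w‖) ^ (p+1) := by ring
      have e4 : C * (1 + ‖w‖) ^ p ≤ C * (1 + ‖w‖) ^ (p+1) :=
        mul_le_mul_of_nonneg_left (pow_le_pow_right₀ hw1 (Nat.le_succ p)) hC
      calc |(-(w s)) * g w + pd s g w| ≤ |(-(w s)) * g w| + |pd s g w| := abs_add_le _ _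
        _ ≤ C * (1 + ‖w‖) ^ (p+1) + C * (1 + ‖w‖) ^ (p+1) :=
            add_le_add (e1.trans_eq e3) (e2.trans e4)
        _ = 2 * C * (1 + ‖w‖) ^ (p+1) := by ring
    have hpow : (1 + ‖w‖) ^ (p+1) ≤ 2 ^ (p+1) * (1 + ‖v‖) ^ (p+1) := by
      rw [← mul_pow]
      apply pow_le_pow_left₀ (by linarith)
      linarith
    -- Gaussian estimate
    have hf0w : f0v w ≤ Real.exp ‖v‖ * f0v v := by
      have hsum : ∑ i, w i ^ 2 = (∑ i, v i ^ 2) + (2 * t * v s + t ^ 2) := by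
        have hterm : ∀ i : Fin d, w i ^ 2 =
            v i ^ 2 + (if i = s then 2 * t * v i + t ^ 2 else 0) := by
          intro i
          rw [hw]
          by_cases hi : i = s
          · subst hi; simp [hes, Pi.single_apply]; ring
          · simp [hes, Pi.single_apply, hi]
        rw [Finset.sum_congr rfl fun i _ => hterm i, Finset.sum_add_distrib,
          Finset.sum_ite_eq' Finset.univ s fun i => 2 * t * v i + t ^ 2]
        simp
      have hvs : |v s| ≤ ‖v‖ := by
        have := norm_le_pi_norm v s; rwa [Real.norm_eq_abs] at this
      have : -(∑ i, w i ^ 2) / 2 ≤ ‖v‖ + -(∑ i, v i ^ 2) / 2 := by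
        rw [hsum]
        have h2 : -(2 * t * v s) ≤ 2 * |v s| := by
          have := abs_mul (2 * t) (v s)
          have h3 : |2 * t * v s| ≤ 2 * |v s| := by
            rw [abs_mul, abs_mul]
            have : |(2:ℝ)| * |t| ≤ 2 := by rw [abs_two]; nlinarith [abs_nonneg t]
            nlinarith [abs_nonneg (v s), abs_nonneg t]
          linarith [neg_abs_le (2 * t * v s)]
        nlinarith [sq_nonneg t]
      calc f0v w = Real.exp (-(∑ i, w i ^ 2) / 2) := rfl
        _ ≤ Real.exp (‖v‖ + -(∑ i, v i ^ 2) / 2) := Real.exp_le_exp.2 this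
        _ = Real.exp ‖v‖ * f0v v := by rw [Real.exp_add]; rfl
    -- combine
    rw [hder w, abs_mul, abs_of_pos (f0v_pos w), hbound]
    calc f0v w * |(-(w s) * g w + pd s g w)|
        ≤ f0v w * (2 * C * (1 + ‖w‖) ^ (p+1)) :=
          mul_le_mul_of_nonneg_left hbr (f0v_pos w).le
      _ ≤ (Real.exp ‖v‖ * f0v v) * (2 * C * (2 ^ (p+1) * (1 + ‖v‖) ^ (p+1))) := by
          apply mul_le_mul hf0w (mul_le_mul_of_nonneg_left hpow (by positivity))
            (by positivity) (mul_nonneg (Real.exp_nonneg _) (f0v_pos v).le)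
      _ = (2 * C * 2 ^ (p+1)) * ((1 + ‖v‖) ^ (p+1) * (Real.exp ‖v‖ * f0v v)) := by ring
  have hInt : Integrable h := integrable_f0v_mul hg.continuous C p h0
  have hzero : (fun v : Fin d → ℝ => v + (0:ℝ) • es) = id := by
    funext v; simp
  have hmain := hasDerivAt_integral_of_dominated_loc_of_deriv_le
    (F := fun (t : ℝ) (v : Fin d → ℝ) => h (v + t • es))
    (F' := fun (t : ℝ) (v : Fin d → ℝ) => pd s h (v + t • es))
    (x₀ := (0:ℝ)) (bound := bound) (Metric.ball_mem_nhds 0 one_pos)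
    (Filter.Eventually.of_forall fun t =>
      ((hsm.continuous.comp (continuous_id.add continuous_const)).aestronglyMeasurable))
    (by simpa using hInt)
    (((pd_continuous hsm s).comp (continuous_id.add continuous_const)).aestronglyMeasurable)
    (ae_of_all _ fun v t ht => by
      rw [Real.norm_eq_abs]
      exact hbd v t (by
        have : dist t 0 < 1 := Metric.mem_ball.1 ht
        rw [Real.dist_eq, sub_zero] at this
        exact this.le))
    ((dom_integrable (p+1)).const_mul _)
    (ae_of_all _ fun v t _ => by
      have hγ : HasDerivAt (fun t : ℝ => v + t • es) es t := by
        simpa using ((hasDerivAt_id t).smul_const es).const_add v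
      have hF : HasFDerivAt h (fderiv ℝ h (v + t • es)) (v + t • es) :=
        (hdiff (v + t • es)).hasFDerivAt
      have := hF.comp_hasDerivAt t hγ
      simpa [pd, Function.comp_def, hes] using this)
  have hconst : (fun t : ℝ => ∫ v, h (v + t • es)) = fun _ => ∫ v, h v := by
    funext t
    exact integral_add_right_eq_self h (t • es)
  have h2 : HasDerivAt (fun t : ℝ => ∫ v, h (v + t • es)) 0 0 := by
    rw [hconst]; exact hasDerivAt_const _ _
  have := hmain.2.unique h2
  rw [show (fun v : Fin d → ℝ => pd s h (v + (0:ℝ) • es)) = pd s h by funext v; simp] at this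
  exact this

end Step3

section Torus

lemma insertNth_one_eq {n : ℕ} (s : Fin (n+1)) (x : Fin n → ℝ) :
    (Fin.insertNth (α := fun _ => ℝ) s 1 x)
      = (Fin.insertNth (α := fun _ => ℝ) s 0 x) + Pi.single s 1 := by
  funext j
  rcases eq_or_ne j s with hj | hj
  · subst hj; simp
  · obtain ⟨k, hk⟩ := Fin.exists_succAbove_eq hj
    rw [← hk]
    simp [Fin.insertNth_apply_succAbove, Pi.single_apply, Fin.succAbove_ne s k]

lemma integral_cube_pd {d : ℕ} (u : (Fin d → ℝ) → ℝ) (hu : ContDiff ℝ (⊤ : ℕ∞) u)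
    (hper : Per u) (s : Fin d) : ∫ x in cube d, pd s u x = 0 := by
  obtain ⟨n, rfl⟩ : ∃ n, d = n + 1 := ⟨d - 1, by have := s.pos; omega⟩
  classical
  set f : (Fin (n+1) → ℝ) → (Fin (n+1) → ℝ) := fun x => Pi.single s (u x) with hf
  set f' : (Fin (n+1) → ℝ) → (Fin (n+1) → ℝ) →L[ℝ] (Fin (n+1) → ℝ) :=
    fun x => ContinuousLinearMap.pi (fun i => if i = s then fderiv ℝ u x else 0) with hf'
  have hud : Differentiable ℝ u := hu.differentiable (by simp)
  have hder : ∀ x, HasFDerivAt f (f' x) x := by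
    intro x
    apply hasFDerivAt_pi''
    intro i
    have : (fun y => f y i) = fun y => if i = s then u y else 0 := by
      funext y; rw [hf]; by_cases hi : i = s <;> simp [Pi.single_apply, hi]
    rw [this]
    have hproj : (ContinuousLinearMap.proj i).comp (f' x)
        = if i = s then fderiv ℝ u x else 0 := by
      ext y
      simp [hf', ContinuousLinearMap.proj_apply, ContinuousLinearMap.pi_apply]
    rw [hproj]
    by_cases hi : i = s
    · simp only [hi, if_true]
      exact (hud x).hasFDerivAt
    · simp only [hi, if_false]
      exact hasFDerivAt_const 0 x
  have hdiv : ∀ x, (∑ i, f' x (Pi.single i 1) i) = pd s u x := by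
    intro x
    have : ∀ i : Fin (n+1), f' x (Pi.single i 1) i
        = if i = s then fderiv ℝ u x (Pi.single i 1) else 0 := by
      intro i
      rw [hf']
      simp only [ContinuousLinearMap.pi_apply]
      rw [apply_ite (fun L : (Fin (n+1) → ℝ) →L[ℝ] ℝ => L (Pi.single i 1))]
      simp
    rw [Finset.sum_congr rfl fun i _ => this i, Finset.sum_ite_eq' Finset.univ s
      (fun i => fderiv ℝ u x (Pi.single i 1))]
    simp [pd]
  have hIcc : ∫ x in cube (n+1), pd s u x = ∫ x in Icc (0 : Fin (n+1) → ℝ) 1, pd s u x := by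
    rw [cube, volume_pi, setIntegral_congr_set Measure.univ_pi_Ioc_ae_eq_Icc]
    rfl
  have hInt : IntegrableOn (fun x => ∑ i, f' x (Pi.single i 1) i)
      (Icc (0 : Fin (n+1) → ℝ) 1) := by
    rw [show (fun x => ∑ i, f' x (Pi.single i 1) i) = pd s u from funext hdiv]
    exact (pd_continuous hu s).continuousOn.integrableOn_compact isCompact_Icc
  have hmain := MeasureTheory.integral_divergence_of_hasFDerivAt_off_countable
    (a := (0 : Fin (n+1) → ℝ)) (b := 1) (fun i => zero_le_one) f f' ∅ Set.countable_empty
    (by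
      apply Continuous.continuousOn
      rw [hf]
      exact continuous_pi fun i => by
        by_cases hi : i = s
        · subst hi; simpa using hu.continuous
        · simpa [Pi.single_apply, hi] using continuous_const)
    (fun x _ => hder x) hInt
  rw [hIcc, ← funext hdiv, hmain]
  apply Finset.sum_eq_zero
  intro i _
  rcases eq_or_ne i s with rfl | hi
  · have : ∀ x : Fin n → ℝ, f (i.insertNth ((1 : Fin (n+1) → ℝ) i) x) i
        = f (i.insertNth ((0 : Fin (n+1) → ℝ) i) x) i := by
      intro x
      rw [hf]
      simp only [Pi.single_eq_same, Pi.one_apply, Pi.zero_apply]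
      rw [show ((1:ℝ)) = (1 : ℝ) from rfl]
      calc u (i.insertNth 1 x) = u (i.insertNth 0 x + Pi.single i 1) := by
            rw [insertNth_one_eq]
        _ = u (i.insertNth 0 x) := hper _ i
    rw [sub_eq_zero]
    exact setIntegral_congr_fun measurableSet_Icc fun x _ => this x
  · have hz : ∀ c : ℝ, ∀ x : Fin n → ℝ, f (i.insertNth c x) i = 0 := by
      intro c x; rw [hf]; simp [Pi.single_apply, hi]
    rw [sub_eq_zero]
    rw [setIntegral_congr_fun measurableSet_Icc fun x _ => hz _ x,
      setIntegral_congr_fun measurableSet_Icc fun x _ => hz _ x]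

end Torus

section Helpers
variable {d : ℕ}

lemma cube_subset_Icc : cube d ⊆ Icc (0 : Fin d → ℝ) 1 := by
  intro x hx
  rw [Set.mem_Icc]
  constructor <;> intro i
  · exact (hx i (Set.mem_univ i)).1.le
  · exact (hx i (Set.mem_univ i)).2

lemma integrableOn_cube {f : (Fin d → ℝ) → ℝ} (hf : Continuous f) :
    IntegrableOn f (cube d) :=
  (hf.continuousOn.integrableOn_compact isCompact_Icc).mono_set cube_subset_Icc

lemma integral_f0v_pos (hd : 0 < d) : 0 < ∫ v : Fin d → ℝ, f0v v := by
  rw [show (f0v (d := d)) = fun v => ∏ i, Real.exp (-(v i ^ 2) / 2) from funext f0v_eq_prod]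
  rw [volume_pi]; beta_reduce; rw [MeasureTheory.integral_fintype_prod_eq_pow (ι := Fin d) (fun t : ℝ => Real.exp (-(t ^ 2) / 2))]
  apply pow_pos
  have : ∀ t : ℝ, Real.exp (-(t ^ 2) / 2) = Real.exp (-(1/2 : ℝ) * t ^ 2) := fun t => by ring_nf
  rw [show (fun t : ℝ => Real.exp (-(t ^ 2) / 2)) = fun t => Real.exp (-(1/2 : ℝ) * t ^ 2)
    from funext this]
  rw [integral_gaussian]
  positivity

/-- integrability of the `v`-derivative of a Gaussian-weighted function. -/
lemma integrable_pd_f0v_mul {g : (Fin d → ℝ) → ℝ} (hg : ContDiff ℝ (⊤ : ℕ∞) g)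
    {C : ℝ} {p : ℕ} (h0 : ∀ v, |g v| ≤ C * (1 + ‖v‖) ^ p)
    (h1 : ∀ v (s' : Fin d), |pd s' g v| ≤ C * (1 + ‖v‖) ^ p) (s : Fin d) :
    Integrable (pd s (fun w => f0v w * g w)) := by
  have hC : 0 ≤ C := le_trans (abs_nonneg (g 0)) (by simpa using h0 0)
  have hgd : Differentiable ℝ g := hg.differentiable (by simp)
  apply integrable_dom_bound (pd_continuous (contDiff_f0v.mul hg) s) (2 * C) (p + 1)
  intro v
  have hder : pd s (fun w => f0v w * g w) v = f0v v * (-(v s) * g v + pd s g v) := by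
    rw [pd_mul (differentiable_f0v v) (hgd v), pd_f0v]; ring
  have hv1 : (1:ℝ) ≤ 1 + ‖v‖ := by linarith [norm_nonneg v]
  have hvs : |v s| ≤ 1 + ‖v‖ := by
    have := norm_le_pi_norm v s; rw [Real.norm_eq_abs] at this; linarith
  have hbr : |(-(v s) * g v + pd s g v)| ≤ 2 * C * (1 + ‖v‖) ^ (p+1) := by
    have e1 : |(-(v s)) * g v| ≤ (1 + ‖v‖) * (C * (1 + ‖v‖) ^ p) := by
      rw [abs_mul, abs_neg]
      exact mul_le_mul hvs (h0 v) (abs_nonneg _) (by linarith)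
    have e4 : C * (1 + ‖v‖) ^ p ≤ C * (1 + ‖v‖) ^ (p+1) :=
      mul_le_mul_of_nonneg_left (pow_le_pow_right₀ hv1 (Nat.le_succ p)) hC
    calc |(-(v s)) * g v + pd s g v| ≤ |(-(v s)) * g v| + |pd s g v| := abs_add_le _ _
      _ ≤ C * (1 + ‖v‖) ^ (p+1) + C * (1 + ‖v‖) ^ (p+1) :=
          add_le_add (e1.trans_eq (by ring)) ((h1 v s).trans e4)
      _ = 2 * C * (1 + ‖v‖) ^ (p+1) := by ring
  rw [hder, abs_mul, abs_of_pos (f0v_pos v)]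
  have h3 : (1:ℝ) ≤ Real.exp ‖v‖ := Real.one_le_exp (norm_nonneg v)
  calc f0v v * |(-(v s) * g v + pd s g v)| ≤ f0v v * (2 * C * (1 + ‖v‖) ^ (p+1)) :=
      mul_le_mul_of_nonneg_left hbr (f0v_pos v).le
    _ ≤ 2 * C * ((1 + ‖v‖) ^ (p+1) * (Real.exp ‖v‖ * f0v v)) := by
        have h4 := mul_nonneg (mul_nonneg (mul_nonneg (by norm_num : (0:ℝ) ≤ 2) hC)
          (pow_nonneg (by linarith : (0:ℝ) ≤ 1 + ‖v‖) (p+1)))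
          (mul_nonneg (f0v_pos v).le (sub_nonneg.2 h3))
        nlinarith [h4]

lemma integral_sum2 {ιa ιb : Type*} [Fintype ιa] [Fintype ιb]
    (φ : ιa → ιb → (Fin d → ℝ) → ℝ) (hint : ∀ a b, Integrable (φ a b)) :
    ∫ v, ∑ a, ∑ b, φ a b v = ∑ a, ∑ b, ∫ v, φ a b v := by
  rw [integral_finset_sum _ fun a _ => integrable_finset_sum _ fun b _ => hint a b]
  exact Finset.sum_congr rfl fun a _ => integral_finset_sum _ fun b _ => hint a b

lemma integral_sum3 {ιa ιb ιc : Type*} [Fintype ιa] [Fintype ιb] [Fintype ιc]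
    (φ : ιa → ιb → ιc → (Fin d → ℝ) → ℝ) (hint : ∀ a b c', Integrable (φ a b c')) :
    ∫ v, ∑ a, ∑ b, ∑ c', φ a b c' v = ∑ a, ∑ b, ∑ c', ∫ v, φ a b c' v := by
  rw [integral_finset_sum _ fun a _ => integrable_finset_sum _ fun b _ =>
    integrable_finset_sum _ fun c' _ => hint a b c']
  exact Finset.sum_congr rfl fun a _ => integral_sum2 _ fun b c' => hint a b c'

lemma pd_sum_mul {r : ℕ} {X : Fin r → (Fin d → ℝ) → ℝ} {x : Fin d → ℝ}
    (hX : ∀ i, DifferentiableAt ℝ (X i) x) (A : Fin r → ℝ) (c : ℝ) (s : Fin d) :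
    pd s (fun y => c * ∑ i, X i y * A i) x = c * ∑ i, pd s (X i) x * A i := by
  have hd : ∀ i : Fin r, DifferentiableAt ℝ (fun y => X i y * A i) x :=
    fun i => (hX i).mul_const (A i)
  rw [pd_const_mul (DifferentiableAt.fun_sum fun i _ => hd i) c, pd_sum hd]
  congr 1
  exact Finset.sum_congr rfl fun i _ => pd_mul_const (hX i) (A i) s

end Helpers
/-- the discrete mass continuity equation
`(ρ^{n+1} − ρ^n)/τ + ∇_x · j^n = 0` holds pointwise, and total mass is preserved. -/
theorem discrete_mass_continuity
    (d r R R' : ℕ) (hd : 0 < d) (hr : 0 < r) (hR' : 0 < R')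
    (τ : ℝ) (hτ : 0 < τ)
    (S : Fin r → Fin r → ℝ)
    (E : (Fin d → ℝ) → Fin d → ℝ)
    (hEsm : ∀ s, ContDiff ℝ (⊤ : ℕ∞) fun x => E x s)
    (hEper : ∀ s, Per fun x => E x s)
    (X : Fin r → (Fin d → ℝ) → ℝ)
    (hXsm : ∀ i, ContDiff ℝ (⊤ : ℕ∞) (X i)) (hXper : ∀ i, Per (X i))
    (hXon : ∀ i j, ipx (X i) (X j) = if i = j then (1 : ℝ) else 0)
    (V : Fin r → (Fin d → ℝ) → ℝ)
    (hVsm : ∀ j, ContDiff ℝ (⊤ : ℕ∞) (V j)) (hVpoly : ∀ j, PolyAll (V j))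
    (hVon : ∀ i j, ipv (V i) (V j) = if i = j then (1 : ℝ) else 0)
    (Xt : Fin R → (Fin d → ℝ) → ℝ)
    (hXtsm : ∀ k, ContDiff ℝ (⊤ : ℕ∞) (Xt k)) (hXtper : ∀ k, Per (Xt k))
    (hXton : ∀ k l, ipx (Xt k) (Xt l) = if k = l then (1 : ℝ) else 0)
    (Vt : Fin R' → (Fin d → ℝ) → ℝ)
    (hVtsm : ∀ l, ContDiff ℝ (⊤ : ℕ∞) (Vt l)) (hVtpoly : ∀ l, PolyAll (Vt l))
    (hVton : ∀ k l, ipv (Vt k) (Vt l) = if k = l then (1 : ℝ) else 0)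
    -- the low-rank function f^n and the right-hand side RHS[f^n]
    (fn : (Fin d → ℝ) → (Fin d → ℝ) → ℝ)
    (hfn : fn = fun x v => f0v v * ∑ i, ∑ j, X i x * S i j * V j v)
    (RHS : (Fin d → ℝ) → (Fin d → ℝ) → ℝ)
    (hRHS : RHS = fun x v =>
      -(∑ s, v s * pd s (fun y => fn y v) x) + ∑ s, E x s * pd s (fn x) v)
    -- the K step: K^{n+1}_k = K^n_k + τ ∫ V_k RHS[f^n] dv
    (K1 : Fin r → (Fin d → ℝ) → ℝ)
    (hK1 : K1 = fun k x => (∑ i, X i x * S i k) + τ * ∫ v, V k v * RHS x v)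
    -- the augmented bases contain X_i, ∂_s X_i, K_i^{n+1} and V_j respectively
    (hspanX : ∀ i, X i ∈ Submodule.span ℝ (Set.range Xt))
    (hspanDX : ∀ i s, pd s (X i) ∈ Submodule.span ℝ (Set.range Xt))
    (hspanK : ∀ i, K1 i ∈ Submodule.span ℝ (Set.range Xt))
    (hspanV : ∀ j, V j ∈ Submodule.span ℝ (Set.range Vt))
    -- the projection matrices M, N^T and the updated coefficients S̃^{n+1}
    (M : Fin R → Fin r → ℝ) (hM : M = fun k i => ipx (Xt k) (X i))
    (NT : Fin r → Fin R' → ℝ) (hNT : NT = fun j l => ipv (V j) (Vt l))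
    (St : Fin R → Fin R' → ℝ)
    (hSt : St = fun k l => (∑ i, ∑ j, M k i * S i j * NT j l)
      + τ * ∫ x in cube d, ∫ v, Xt k x * Vt l v * RHS x v)
    -- the first velocity basis function is the normalized constant 1/‖1‖
    (hV1 : V ⟨0, hr⟩ = fun _ => 1 / nv fun _ : Fin d → ℝ => (1 : ℝ))
    (hVt1 : Vt ⟨0, hR'⟩ = fun _ => 1 / nv fun _ : Fin d → ℝ => (1 : ℝ))
    -- the moments ρ^n, ρ^{n+1} = ‖1‖ Σ_k X̃_k^{n+1} S̃^{n+1}_{k1}, and j^n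
    (ρ ρ' : (Fin d → ℝ) → ℝ) (jn : (Fin d → ℝ) → Fin d → ℝ)
    (hρ : ρ = fun x => ∫ v, fn x v)
    (hρ' : ρ' = fun x =>
      (nv fun _ : Fin d → ℝ => (1 : ℝ)) * ∑ k, Xt k x * St k ⟨0, hR'⟩)
    (hjn : jn = fun x s => ∫ v, v s * fn x v) :
    (∀ x, (ρ' x - ρ x) / τ + ∑ s, pd s (fun y => jn y s) x = 0) ∧
      (∫ x in cube d, ρ' x) = ∫ x in cube d, ρ x := by

  classical
  set z : Fin r := ⟨0, hr⟩ with hz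
  set z' : Fin R' := ⟨0, hR'⟩ with hz'
  set c : ℝ := nv (fun _ : Fin d → ℝ => (1:ℝ)) with hc
  -- positivity of c
  have hipv11 : ipv (fun _ : Fin d → ℝ => (1:ℝ)) (fun _ => (1:ℝ)) = ∫ v : Fin d → ℝ, f0v v := by
    simp [ipv]
  have hcpos : 0 < c := by
    rw [hc, nv, hipv11]; exact Real.sqrt_pos.2 (integral_f0v_pos hd)
  have hcne : c ≠ 0 := hcpos.ne'
  have hXd : ∀ i (x : Fin d → ℝ), DifferentiableAt ℝ (X i) x :=
    fun i x => ((hXsm i).differentiable (by simp)) x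
  have hVcont : ∀ j, Continuous (V j) := fun j => (hVsm j).continuous
  have hXcont : ∀ i, Continuous (X i) := fun i => (hXsm i).continuous
  have hXtcont : ∀ k, Continuous (Xt k) := fun k => (hXtsm k).continuous
  -- integrability of moments
  choose CV pV hCV using fun j => polyBound0 (hVpoly j)
  have hIntVj : ∀ j, Integrable (fun v => f0v v * V j v) :=
    fun j => integrable_f0v_mul (hVcont j) (CV j) (pV j) (hCV j)
  have hIntvVj : ∀ (s' : Fin d) j, Integrable (fun v : Fin d → ℝ => v s' * f0v v * V j v) := by
    intro s' j
    rw [show (fun v : Fin d → ℝ => v s' * f0v v * V j v) = fun v => f0v v * (v s' * V j v)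
      from funext fun v => by ring]
    apply integrable_f0v_mul ((continuous_apply s').mul (hVcont j)) (CV j) (pV j + 1)
    intro v
    have h1 : |v s'| ≤ 1 + ‖v‖ := by
      have := norm_le_pi_norm v s'; rw [Real.norm_eq_abs] at this
      linarith [norm_nonneg v]
    calc |v s' * V j v| = |v s'| * |V j v| := abs_mul _ _
      _ ≤ (1 + ‖v‖) * (CV j * (1 + ‖v‖) ^ pV j) :=
          mul_le_mul h1 (hCV j v) (abs_nonneg _) (by positivity)
      _ = CV j * (1 + ‖v‖) ^ (pV j + 1) := by ring
  -- moments of the Gaussian against V j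
  have hmom : ∀ j, ∫ v, f0v v * V j v = c * (if j = z then 1 else 0) := by
    intro j
    have h1 := hVon j z
    rw [hV1] at h1
    rw [ipv, integral_mul_const] at h1
    have h2 : (∫ v, f0v v * V j v) = (if j = z then (1:ℝ) else 0) * c := by
      rw [← h1]; field_simp
    rw [h2]; ring
  set mm : Fin d → Fin r → ℝ := fun s' j => ∫ v, v s' * f0v v * V j v with hmm
  -- closed form of fn with j-major sums
  have hfn' : ∀ x v, fn x v = f0v v * ∑ j, (∑ i, X i x * S i j) * V j v := by
    intro x v; simp only [hfn]
    congr 1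
    rw [Finset.sum_comm]
    exact Finset.sum_congr rfl fun j _ => by rw [Finset.sum_mul]
  -- ρ closed form
  have hρc : ∀ x, ρ x = c * ∑ i, X i x * S i z := by
    intro x
    simp only [hρ]
    rw [show (fun v => fn x v) = fun v => ∑ j, (∑ i, X i x * S i j) * (f0v v * V j v)
      from funext fun v => by
        rw [hfn' x v, Finset.mul_sum]
        exact Finset.sum_congr rfl fun j _ => by ring]
    rw [integral_finset_sum _ fun j _ => (hIntVj j).const_mul _]
    have h3 : ∀ j : Fin r, ∫ v, (∑ i, X i x * S i j) * (f0v v * V j v)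
        = if j = z then (∑ i, X i x * S i j) * c else 0 := by
      intro j
      rw [integral_const_mul, hmom j]
      by_cases hj : j = z <;> simp [hj]
    rw [Finset.sum_congr rfl fun j _ => h3 j, Finset.sum_ite_eq' Finset.univ z
      (fun j => (∑ i, X i x * S i j) * c)]
    simp [mul_comm]
  -- pd of fn in the x variable
  have hpdfnx : ∀ (v x : Fin d → ℝ) (s' : Fin d),
      pd s' (fun y => fn y v) x = f0v v * ∑ i, ∑ j, pd s' (X i) x * (S i j * V j v) := by
    intro v x s'
    have h1 : (fun y => fn y v) = fun y => f0v v * ∑ i, X i y * (∑ j, S i j * V j v) := by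
      funext y; simp only [hfn]
      congr 1
      exact Finset.sum_congr rfl fun i _ => by
        rw [Finset.mul_sum]
        exact Finset.sum_congr rfl fun j _ => by ring
    rw [h1, pd_sum_mul (fun i => hXd i x) _ _ s']
    congr 1
    exact Finset.sum_congr rfl fun i _ => by rw [Finset.mul_sum]
  -- jn closed form
  have hjnc : ∀ (x : Fin d → ℝ) (s' : Fin d), jn x s' = ∑ i, ∑ j, X i x * S i j * mm s' j := by
    intro x s'
    simp only [hjn]
    rw [show (fun v => v s' * fn x v)
        = fun v => ∑ i, ∑ j, (X i x * S i j) * (v s' * f0v v * V j v) from funext fun v => by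
      simp only [hfn]
      simp only [Finset.mul_sum]
      exact Finset.sum_congr rfl fun i _ => Finset.sum_congr rfl fun j _ => by ring]
    rw [integral_sum2 _ fun i j => (hIntvVj s' j).const_mul _]
    exact Finset.sum_congr rfl fun i _ => Finset.sum_congr rfl fun j _ => by
      rw [integral_const_mul, hmm]
  have hjnpd : ∀ (x : Fin d → ℝ) (s' : Fin d),
      pd s' (fun y => jn y s') x = ∑ i, ∑ j, pd s' (X i) x * S i j * mm s' j := by
    intro x s'
    have h1 : (fun y => jn y s') = fun y => (1:ℝ) * ∑ i, X i y * (∑ j, S i j * mm s' j) := by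
      funext y
      rw [hjnc y s', one_mul]
      exact Finset.sum_congr rfl fun i _ => by
        rw [Finset.mul_sum]
        exact Finset.sum_congr rfl fun j _ => by ring
    rw [h1, pd_sum_mul (fun i => hXd i x) _ _ s', one_mul]
    exact Finset.sum_congr rfl fun i _ => by
      rw [Finset.mul_sum]
      exact Finset.sum_congr rfl fun j _ => by ring
  have hpdXcont : ∀ (s' : Fin d) i, Continuous (fun x => pd s' (X i) x) :=
    fun s' i => pd_continuous (hXsm i) s'
  -- the core computation: the v-integral of RHS
  have hcore : ∀ x, ∫ v, RHS x v
      = -(∑ s', ∑ i, ∑ j, pd s' (X i) x * S i j * mm s' j) := by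
    intro x
    set aj : Fin r → ℝ := fun j => ∑ i, X i x * S i j with haj
    obtain ⟨CG, pG, hCG0, hG0, hG1⟩ := comb_bound V hVsm hVpoly aj
    have hGsm := comb_smooth V hVsm aj
    have hfnx : fn x = fun v => f0v v * ∑ j, aj j * V j v := funext fun v => by
      rw [hfn' x v]
    have hT1eq : (fun v : Fin d → ℝ => -(∑ s', v s' * pd s' (fun y => fn y v) x))
        = fun v => -(∑ s', ∑ i, ∑ j, (pd s' (X i) x * S i j) * (v s' * f0v v * V j v)) := by
      funext v
      congr 1
      refine Finset.sum_congr rfl fun s' _ => ?_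
      rw [hpdfnx v x s']
      simp only [Finset.mul_sum]
      exact Finset.sum_congr rfl fun i _ => Finset.sum_congr rfl fun j _ => by ring
    have hT1int : Integrable (fun v : Fin d → ℝ => -(∑ s', v s' * pd s' (fun y => fn y v) x)) := by
      rw [hT1eq]
      exact (integrable_finset_sum _ fun s' _ => integrable_finset_sum _ fun i _ =>
        integrable_finset_sum _ fun j _ => (hIntvVj s' j).const_mul _).neg
    have hT2int0 : ∀ s' : Fin d, Integrable (pd s' (fn x)) := by
      intro s'
      rw [hfnx]
      exact integrable_pd_f0v_mul hGsm hG0 hG1 s'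
    have hT2int : Integrable (fun v => ∑ s', E x s' * pd s' (fn x) v) :=
      integrable_finset_sum _ fun s' _ => (hT2int0 s').const_mul _
    have hsplit : (fun v => RHS x v) = fun v =>
        (-(∑ s', v s' * pd s' (fun y => fn y v) x)) + (∑ s', E x s' * pd s' (fn x) v) := by
      funext v; rw [hRHS]
    rw [show ∫ v, RHS x v = ∫ v, ((-(∑ s', v s' * pd s' (fun y => fn y v) x))
        + (∑ s', E x s' * pd s' (fn x) v)) from by rw [← hsplit]]
    rw [integral_add hT1int hT2int]
    have hT2 : ∫ v, ∑ s', E x s' * pd s' (fn x) v = 0 := by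
      rw [integral_finset_sum _ fun s' _ => (hT2int0 s').const_mul _]
      refine Finset.sum_eq_zero fun s' _ => ?_
      rw [integral_const_mul]
      have h5 : ∫ v, pd s' (fn x) v = 0 := by
        rw [hfnx]
        exact integral_pd_f0v_mul hGsm hG0 hG1 s'
      rw [h5, mul_zero]
    rw [hT2, add_zero, hT1eq, integral_neg,
      integral_sum3 _ fun s' i j => (hIntvVj s' j).const_mul _]
    congr 1
    refine Finset.sum_congr rfl fun s' _ => Finset.sum_congr rfl fun i _ =>
      Finset.sum_congr rfl fun j _ => ?_
    rw [integral_const_mul]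
  set D : (Fin d → ℝ) → ℝ :=
    fun x => -(∑ s', ∑ i, ∑ j, pd s' (X i) x * S i j * mm s' j) with hD
  have hDcont : Continuous D := by
    apply Continuous.neg
    exact continuous_finset_sum _ fun s' _ => continuous_finset_sum _ fun i _ =>
      continuous_finset_sum _ fun j _ => ((hpdXcont s' i).mul continuous_const).mul
        continuous_const
  have hRHSD : ∀ x, ∫ v, RHS x v = D x := hcore
  -- K1 at index 0
  have hK0 : ∀ x, K1 z x = (∑ i, X i x * S i z) + τ * ((1/c) * D x) := by
    intro x
    simp only [hK1]
    congr 1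
    rw [show (fun v => V z v * RHS x v) = fun v => (1/c) * RHS x v from funext fun v => by
      rw [hV1]]
    rw [integral_const_mul, hRHSD x]
  -- NT at index 0
  have hNT0 : ∀ j, NT j z' = if j = z then 1 else 0 := by
    intro j
    simp only [hNT]
    rw [hVt1, ← hV1]
    exact hVon j z
  -- St at index 0
  have hSt0 : ∀ k, St k z' = (∑ i, ipx (Xt k) (X i) * S i z)
      + τ * ∫ x in cube d, Xt k x * ((1/c) * D x) := by
    intro k
    simp only [hSt]
    have hfirst : ∑ i, ∑ j, M k i * S i j * NT j z' = ∑ i, ipx (Xt k) (X i) * S i z := by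
      refine Finset.sum_congr rfl fun i _ => ?_
      have h9 : ∀ j, M k i * S i j * NT j z'
          = if j = z then ipx (Xt k) (X i) * S i z else 0 := by
        intro j
        simp only [hNT0 j, hM]
        by_cases hj : j = z <;> simp [hj]
      rw [Finset.sum_congr rfl fun j _ => h9 j,
        Finset.sum_ite_eq' Finset.univ z fun _ => ipx (Xt k) (X i) * S i z]
      simp
    have hinner : ∀ x, ∫ v, Xt k x * Vt z' v * RHS x v = Xt k x * ((1/c) * D x) := by
      intro x
      rw [show (fun v => Xt k x * Vt z' v * RHS x v) = fun v =>
        (Xt k x * (1/c)) * RHS x v from funext fun v => by rw [hVt1]]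
      rw [integral_const_mul, hRHSD x]
      ring
    rw [hfirst]
    simp only [hinner]
  -- ipx of Xt k against K1 z
  have hipxK : ∀ k, ipx (Xt k) (K1 z) = (∑ i, ipx (Xt k) (X i) * S i z)
      + τ * ∫ x in cube d, Xt k x * ((1/c) * D x) := by
    intro k
    rw [ipx]
    rw [show (fun x => Xt k x * K1 z x) = fun x =>
        (∑ i, Xt k x * X i x * S i z) + τ * (Xt k x * ((1/c) * D x)) from funext fun x => by
      rw [hK0 x, mul_add, Finset.mul_sum]
      congr 1
      · exact Finset.sum_congr rfl fun i _ => by ring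
      · ring]
    rw [integral_add (f := fun x => ∑ i, Xt k x * X i x * S i z) (g := fun x => τ * (Xt k x * ((1/c) * D x)))
      (integrable_finset_sum _ fun i _ =>
        integrableOn_cube (((hXtcont k).mul (hXcont i)).mul continuous_const))
      ((integrableOn_cube ((hXtcont k).mul (continuous_const.mul hDcont))).const_mul τ)]
    congr 1
    · rw [integral_finset_sum _ (f := fun i x => Xt k x * X i x * S i z) fun i _ =>
        integrableOn_cube (((hXtcont k).mul (hXcont i)).mul continuous_const)]
      exact Finset.sum_congr rfl fun i _ => by rw [integral_mul_const]; rfl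
    · rw [integral_const_mul]
  -- reconstruction of K1 z from the augmented basis
  obtain ⟨cf, hcf⟩ := (Submodule.mem_span_range_iff_exists_fun ℝ).1 (hspanK z)
  have hKfun : ∀ x, K1 z x = ∑ k, cf k * Xt k x := by
    intro x
    have h6 := congr_fun hcf x
    rw [← h6]
    simp [Finset.sum_apply]
  have hipxcf : ∀ k, ipx (Xt k) (K1 z) = cf k := by
    intro k
    rw [ipx]
    rw [show (fun x => Xt k x * K1 z x) = fun x => ∑ l, cf l * (Xt k x * Xt l x) from
      funext fun x => by
        rw [hKfun x, Finset.mul_sum]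
        exact Finset.sum_congr rfl fun l _ => by ring]
    rw [integral_finset_sum _ (f := fun l x => cf l * (Xt k x * Xt l x)) fun l _ =>
      integrableOn_cube (continuous_const.mul ((hXtcont k).mul (hXtcont l)))]
    have h7 : ∀ l, ∫ x in cube d, cf l * (Xt k x * Xt l x)
        = if k = l then cf l else 0 := by
      intro l
      rw [integral_const_mul]
      have := hXton k l
      rw [ipx] at this
      rw [this]
      by_cases hl : k = l <;> simp [hl]
    rw [Finset.sum_congr rfl fun l _ => h7 l, Finset.sum_ite_eq Finset.univ k cf]
    simp
  have hStv : ∀ k, St k z' = cf k := fun k => by rw [hSt0 k, ← hipxK k, hipxcf k]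
  -- closed form of ρ'
  have hρ'c : ∀ x, ρ' x = c * K1 z x := by
    intro x
    simp only [hρ']
    congr 1
    rw [hKfun x]
    exact Finset.sum_congr rfl fun k _ => by rw [hStv k]; ring
  -- pointwise identity
  have hpoint : ∀ x, ρ' x - ρ x = -(τ * ∑ s', pd s' (fun y => jn y s') x) := by
    intro x
    rw [hρ'c x, hK0 x, hρc x]
    have hDx : D x = -(∑ s', pd s' (fun y => jn y s') x) := by
      simp only [hD]
      congr 1
      exact Finset.sum_congr rfl fun s' _ => (hjnpd x s').symm
    rw [hDx]
    field_simp
    ring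
  constructor
  · intro x
    rw [hpoint x]
    field_simp
    ring
  · -- mass conservation
    have hjnsm : ∀ s' : Fin d, ContDiff ℝ (⊤ : ℕ∞) (fun y => jn y s') := by
      intro s'
      rw [show (fun y => jn y s') = fun y => ∑ i, ∑ j, X i y * S i j * mm s' j from
        funext fun y => hjnc y s']
      exact ContDiff.sum fun i _ => ContDiff.sum fun j _ =>
        ((hXsm i).mul contDiff_const).mul contDiff_const
    have hjnper : ∀ s' : Fin d, Per (fun y => jn y s') := by
      intro s' x i
      show jn (x + Pi.single i 1) s' = jn x s'
      rw [hjnc _ s', hjnc _ s']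
      exact Finset.sum_congr rfl fun i' _ => Finset.sum_congr rfl fun j _ => by
        rw [hXper i' x i]
    have hpdjn0 : ∀ s' : Fin d, ∫ x in cube d, pd s' (fun y => jn y s') x = 0 :=
      fun s' => integral_cube_pd _ (hjnsm s') (hjnper s') s'
    have hρcont : Continuous ρ := by
      rw [show ρ = fun x => c * ∑ i, X i x * S i z from funext hρc]
      exact continuous_const.mul (continuous_finset_sum _ fun i _ =>
        (hXcont i).mul continuous_const)
    have hpdjncont : ∀ s' : Fin d, Continuous fun x => pd s' (fun y => jn y s') x := by
      intro s'
      rw [show (fun x => pd s' (fun y => jn y s') x)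
          = fun x => ∑ i, ∑ j, pd s' (X i) x * S i j * mm s' j from funext fun x => hjnpd x s']
      exact continuous_finset_sum _ fun i _ => continuous_finset_sum _ fun j _ =>
        ((hpdXcont s' i).mul continuous_const).mul continuous_const
    have hρ'fun : ρ' = fun x => ρ x + (-(τ * ∑ s', pd s' (fun y => jn y s') x)) := by
      funext x
      have := hpoint x
      linarith
    rw [hρ'fun]
    beta_reduce; rw [integral_add (f := ρ) (g := fun x => -(τ * ∑ s', pd s' (fun y => jn y s') x)) (integrableOn_cube hρcont)
      (integrableOn_cube ((continuous_const.mul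
        (continuous_finset_sum _ fun s' _ => hpdjncont s')).neg))]
    have h8 : ∫ x in cube d, -(τ * ∑ s', pd s' (fun y => jn y s') x) = 0 := by
      rw [integral_neg, integral_const_mul,
        integral_finset_sum _ fun s' _ => integrableOn_cube (hpdjncont s')]
      rw [Finset.sum_congr rfl fun s' _ => hpdjn0 s']
      simp
    rw [h8, add_zero]
end
end

section
/- For every index a with 1 ≤ a ≤ m, the a-th column of X^{n+1} S^{n+1} equals the a-th column of K̃, i.e. Σ_i X^{n+1}_{· i} S^{n+1}_{i a} = K̃_{· a}. Consequently, since the columns of V^{n+1} = [U W^{n+1}] are orthonormal with U its first m columns, the truncated approximation f^{n+1} = X^{n+1} S^{n+1} (V^{n+1})^T satisfies f^{n+1} (V^{n+1})’s weighted pairing with U_a exactly: the projection of f^{n+1} onto each fixed basis vector U_a is unchanged by the truncation (⟨U_a, f^{n+1}⟩_v = K̃_{· a}). -/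
open Matrix

noncomputable section

/-- in the conservative truncation step, for every `a ≤ m` the `a`-th
column of `X^{n+1} S^{n+1}` equals the `a`-th column of `K̃`; consequently, since the
columns of `V^{n+1} = [U W^{n+1}]` are orthonormal, the weighted pairing of the truncated
approximation `f^{n+1} = X^{n+1} S^{n+1} (V^{n+1})ᵀ` with each fixed basis vector `U_a`
is exactly the `a`-th column of `K̃`.  Here the `r = m + q` retained columns (and the
`R' = m + q'` pre-truncation columns) are indexed by `Fin m ⊕ Fin q` (resp. `Fin m ⊕ Fin q'`),
with the first `m` (conserved) columns indexed by `Sum.inl`. -/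
theorem conservative_truncation
    (nx nv R m q q' : ℕ)
    (hnx : 0 < nx) (hnv : 0 < nv) (hR : 0 < R) (hm : 0 < m) (hqq : q ≤ q')
    -- the augmented factors X̃, S̃ and K̃ = X̃ S̃
    (Xt : Matrix (Fin nx) (Fin R) ℝ) (St : Matrix (Fin R) (Fin m ⊕ Fin q') ℝ)
    (Kt : Matrix (Fin nx) (Fin m ⊕ Fin q') ℝ) (hKt : Kt = Xt * St)
    -- QR decomposition K̃^{cons} = X^{cons} S^{cons} (orthonormal columns)
    (Xcons : Matrix (Fin nx) (Fin m) ℝ) (Scons : Matrix (Fin m) (Fin m) ℝ)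
    (hcons : Kt.submatrix id Sum.inl = Xcons * Scons)
    (hXcons : Xconsᵀ * Xcons = 1)
    -- QR decomposition K̃^{rem} = X̃^{rem} S̃^{rem} (orthonormal columns)
    (Xtrem : Matrix (Fin nx) (Fin q') ℝ) (Strem : Matrix (Fin q') (Fin q') ℝ)
    (hrem : Kt.submatrix id Sum.inr = Xtrem * Strem)
    (hXtrem : Xtremᵀ * Xtrem = 1)
    -- rank-(r−m) truncated SVD  S̃^{rem} ≈ Û Ŝ Ŵᵀ of S̃^{rem}, keeping the q = r − m
    -- largest singular values (Û, Ŵ orthonormal columns, Ŝ diagonal nonnegative)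
    (Uh : Matrix (Fin q') (Fin q) ℝ) (Sh : Fin q → ℝ) (Wh : Matrix (Fin q') (Fin q) ℝ)
    (hUh : Uhᵀ * Uh = 1) (hWh : Whᵀ * Wh = 1) (hSh : ∀ i, 0 ≤ Sh i)
    -- X^{rem} = X̃^{rem} Û, S^{rem} = Ŝ, and QR decomposition [X^{cons} X^{rem}] = X^{n+1} R
    (Xrem : Matrix (Fin nx) (Fin q) ℝ) (hXrem : Xrem = Xtrem * Uh)
    (Xn1 : Matrix (Fin nx) (Fin m ⊕ Fin q) ℝ) (Rm : Matrix (Fin m ⊕ Fin q) (Fin m ⊕ Fin q) ℝ)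
    (hQR : fromCols Xcons Xrem = Xn1 * Rm)
    (hXn1 : Xn1ᵀ * Xn1 = 1)
    -- S^{n+1} = R · blockdiag(S^{cons}, S^{rem})
    (Sn1 : Matrix (Fin m ⊕ Fin q) (Fin m ⊕ Fin q) ℝ)
    (hSn1 : Sn1 = Rm * fromBlocks Scons 0 0 (diagonal Sh))
    -- Ṽ^{n+1} = [U W̃^{n+1}] with orthonormal columns, W^{n+1} = W̃^{n+1} Ŵ,
    -- V^{n+1} = [U W^{n+1}]
    (U : Matrix (Fin nv) (Fin m) ℝ) (Wt : Matrix (Fin nv) (Fin q') ℝ)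
    (hVt : (fromCols U Wt)ᵀ * fromCols U Wt = 1)
    (Vn1 : Matrix (Fin nv) (Fin m ⊕ Fin q) ℝ) (hVn1 : Vn1 = fromCols U (Wt * Wh)) :
    (∀ a : Fin m, ∀ x, (Xn1 * Sn1) x (Sum.inl a) = Kt x (Sum.inl a)) ∧
      ∀ a : Fin m, ∀ x, (Xn1 * Sn1 * Vn1ᵀ * Vn1) x (Sum.inl a) = Kt x (Sum.inl a) := by
  have hXS : Xn1 * Sn1 =
      fromCols (Xcons * Scons) (Xrem * diagonal Sh) := by
    rw [hSn1, ← Matrix.mul_assoc, ← hQR, fromCols_mul_fromBlocks]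
    simp
  have hcol : ∀ a : Fin m, ∀ x, (Xn1 * Sn1) x (Sum.inl a) = Kt x (Sum.inl a) := by
    intro a x
    have := congrFun (congrFun hcons x) a
    simp only [submatrix_apply, id_eq] at this
    rw [hXS]
    simpa [fromCols] using this.symm
  refine ⟨hcol, ?_⟩
  -- orthonormality of the columns of Vn1
  have hVtblocks : fromBlocks (Uᵀ * U) (Uᵀ * Wt) (Wtᵀ * U) (Wtᵀ * Wt)
      = fromBlocks 1 0 0 1 := by
    rw [fromBlocks_one, ← fromRows_mul_fromCols, ← transpose_fromCols, hVt]
  rw [fromBlocks_inj] at hVtblocks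
  obtain ⟨hUU, hUW, hWU, hWW⟩ := hVtblocks
  have hVone : Vn1ᵀ * Vn1 = 1 := by
    have h12 : Uᵀ * (Wt * Wh) = 0 := by
      rw [← Matrix.mul_assoc, hUW, Matrix.zero_mul]
    have h21 : (Wt * Wh)ᵀ * U = 0 := by
      rw [transpose_mul, Matrix.mul_assoc, hWU, Matrix.mul_zero]
    have h22 : (Wt * Wh)ᵀ * (Wt * Wh) = 1 := by
      rw [transpose_mul, Matrix.mul_assoc, ← Matrix.mul_assoc Wtᵀ, hWW, Matrix.one_mul, hWh]
    rw [hVn1, transpose_fromCols, fromRows_mul_fromCols, hUU, h12, h21, h22,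
      fromBlocks_one]
  intro a x
  rw [Matrix.mul_assoc, hVone, Matrix.mul_one]
  exact hcol a x
end
end
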